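/- Let M be a matroid, let S = {x₁, …, x_j} be an independent set enumerated in nonincreasing order of a weight function w (i.e., w(x₁) ≥ w(x₂) ≥ … ≥ w(x_j)), and let e ∉ S be an element such that {e} is independent but S ∪ {e} is dependent. Let i* := max{ i ∈ {1, …, j} : {x₁, …, x_{i−1}} ∪ {e} is independent }. Then every index t with (S \ {x_t}) ∪ {e} independent satisfies t ≤ i*, and hence w(x_t) ≥ w(x_{i*}); in particular x_{i*} attains the minimum of w over { y ∈ S : (S \ {y}) ∪ {e} is independent }. -/
import Mathlib


open Finset

attribute [local instance] Classical.propDecidable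

universe u

/-- A matroid on a ground set `α`, given as a nonempty, downward closed family of
finite independent sets satisfying the augmentation property. -/
structure MatroidOn (α : Type u) where
  Indep : Finset α → Prop
  nonempty : ∃ A, Indep A
  subset_indep : ∀ ⦃A B : Finset α⦄, A ⊆ B → Indep B → Indep A
  augment : ∀ ⦃A B : Finset α⦄, Indep A → Indep B → A.card < B.card →
    ∃ e ∈ B, e ∉ A ∧ Indep (insert e A)

/-- Submodularity of a set function. -/
def SubmodularFn {α : Type u} [DecidableEq α] (f : Finset α → ℝ) : Prop :=
  ∀ X Y : Finset α, X ⊆ Y → ∀ e, e ∉ Y →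
    f (insert e Y) - f Y ≤ f (insert e X) - f X

/-- Monotonicity of a set function. -/
def MonotoneFn {α : Type u} (f : Finset α → ℝ) : Prop :=
  ∀ X Y : Finset α, X ⊆ Y → f X ≤ f Y

variable {α : Type u} [DecidableEq α]

/-- The marginal gain `f(e | T) = f (T ∪ {e}) - f T`. -/
def marg (f : Finset α → ℝ) (T : Finset α) (e : α) : ℝ := f (insert e T) - f T

theorem swap_candidate_attains_minimum_weight
    (M : MatroidOn α) {j : ℕ} (x : Fin j → α) (hinj : Function.Injective x)
    (w : α → ℝ) (hsorted : ∀ s t : Fin j, s ≤ t → w (x t) ≤ w (x s))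
    (S : Finset α) (hS : S = Finset.univ.image x) (hSind : M.Indep S)
    (e : α) (heS : e ∉ S) (heI : M.Indep {e}) (hdep : ¬ M.Indep (insert e S))
    (istar : Fin j)
    (histar : M.Indep (insert e ((Finset.univ.filter fun t => t < istar).image x)))
    (hmax : ∀ t : Fin j,
      M.Indep (insert e ((Finset.univ.filter fun s => s < t).image x)) → t ≤ istar) :
    (∀ t : Fin j, M.Indep (insert e (S.erase (x t))) → t ≤ istar ∧ w (x istar) ≤ w (x t)) ∧
      M.Indep (insert e (S.erase (x istar))) ∧
      ∀ y ∈ S, M.Indep (insert e (S.erase y)) → w (x istar) ≤ w y := by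
  have hScard : S.card = j := by
    rw [hS, Finset.card_image_of_injective _ hinj, Finset.card_univ, Fintype.card_fin]
  set P : Finset α := (Finset.univ.filter fun t => t < istar).image x with hP
  have hPcard : P.card = istar.val := by
    rw [hP, Finset.card_image_of_injective _ hinj]
    have : (Finset.univ.filter fun t => t < istar) = Finset.Iio istar := by
      ext s; simp
    rw [this, Fin.card_Iio]
  have hPS : P ⊆ S := by
    rw [hP, hS]
    intro a ha
    simp only [Finset.mem_image] at ha ⊢
    obtain ⟨s, _, rfl⟩ := ha
    exact ⟨s, Finset.mem_univ s, rfl⟩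
  have hxS : ∀ t : Fin j, x t ∈ S := by
    intro t; rw [hS]; exact Finset.mem_image_of_mem x (Finset.mem_univ t)
  have part1 : ∀ t : Fin j, M.Indep (insert e (S.erase (x t))) → t ≤ istar := by
    intro t hind
    apply hmax
    refine M.subset_indep ?_ hind
    apply Finset.insert_subset_insert
    intro a ha
    simp only [Finset.mem_image, Finset.mem_filter, Finset.mem_univ, true_and] at ha
    obtain ⟨s, hs, rfl⟩ := ha
    refine Finset.mem_erase.mpr ⟨fun h => absurd (hinj h) (ne_of_lt hs), hxS s⟩
  have hkey : ¬ M.Indep (insert (x istar) (insert e P)) := by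
    intro hind
    by_cases hlast : (istar : ℕ) + 1 < j
    · have heq : (Finset.univ.filter fun s => s < (⟨istar.val + 1, hlast⟩ : Fin j)).image x
        = insert (x istar) P := by
        rw [hP]
        ext a
        simp only [Finset.mem_image, Finset.mem_filter, Finset.mem_univ, true_and,
          Finset.mem_insert]
        constructor
        · rintro ⟨s, hs, rfl⟩
          rcases eq_or_lt_of_le (Fin.le_def.mpr (Nat.lt_succ_iff.mp (Fin.lt_def.mp hs))) with h | h
          · exact Or.inl (congrArg x (Fin.ext (Fin.val_eq_of_eq h)).symm ▸ rfl)
          · exact Or.inr ⟨s, h, rfl⟩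
        · rintro (rfl | ⟨s, hs, rfl⟩)
          · exact ⟨istar, by simp [Fin.lt_def], rfl⟩
          · exact ⟨s, by simp [Fin.lt_def]; omega, rfl⟩
      have := hmax ⟨istar.val + 1, hlast⟩ (by
        rw [heq, Finset.insert_comm]
        exact hind)
      simp [Fin.le_def] at this
    · -- istar is the last index: insert (x istar) P ∪ {e} = insert e S
      have hjS : insert (x istar) P = S := by
        apply Finset.Subset.antisymm
        · exact Finset.insert_subset (hxS istar) hPS
        · rw [hS, hP]
          intro a ha
          simp only [Finset.mem_image, Finset.mem_univ, true_and] at ha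
          obtain ⟨s, rfl⟩ := ha
          rcases eq_or_lt_of_le (show s ≤ istar from Fin.le_def.mpr (by omega)) with h | h
          · simp [h]
          · exact Finset.mem_insert_of_mem (Finset.mem_image.mpr ⟨s, by simp [h], rfl⟩)
      rw [Finset.insert_comm, hjS] at hind
      exact hdep hind
  have hmain : ∀ n, istar.val + 1 ≤ n → n ≤ j → ∃ A : Finset α,
      M.Indep A ∧ insert e P ⊆ A ∧ A ⊆ insert e S ∧ x istar ∉ A ∧ A.card = n := by
    intro n
    induction n with
    | zero => omega
    | succ m ih =>
      intro h1 h2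
      by_cases hm : istar.val + 1 ≤ m
      · obtain ⟨A, hAind, hA1, hA2, hA3, hA4⟩ := ih hm (by omega)
        obtain ⟨f, hfS, hfA, hfind⟩ := M.augment hAind hSind (by omega)
        have hfind' : M.Indep (insert f A) :=
          M.subset_indep (fun b hb => by
            simp only [Finset.mem_insert] at hb ⊢; exact hb) hfind
        have hfne : f ≠ x istar := by
          rintro rfl
          exact hkey (M.subset_indep (Finset.insert_subset_insert _ hA1) hfind')
        refine ⟨insert f A, hfind', hA1.trans (Finset.subset_insert _ _),
          Finset.insert_subset (Finset.mem_insert_of_mem hfS) hA2,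
          fun h => (Finset.mem_insert.mp h).elim (fun hc => hfne hc.symm) hA3,
          by rw [Finset.card_insert_of_notMem hfA, hA4]⟩
      · have hm' : m = istar.val := by omega
        have heP : e ∉ P := fun h => heS (hPS h)
        refine ⟨insert e P, histar, le_refl _, ?_, ?_, ?_⟩
        · exact Finset.insert_subset_insert _ hPS
        · simp only [Finset.mem_insert]
          rintro (h | h)
          · exact heS (h ▸ hxS istar)
          · rw [hP] at h
            simp only [Finset.mem_image, Finset.mem_filter, Finset.mem_univ, true_and] at h
            obtain ⟨s, hs, hsx⟩ := h
            exact absurd (hinj hsx) (ne_of_lt hs)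
        · rw [Finset.card_insert_of_notMem heP, hPcard, hm']
  obtain ⟨A, hAind, hA1, hA2, hA3, hA4⟩ := hmain j (by omega) le_rfl
  have hAeq : A = insert e (S.erase (x istar)) := by
    apply Finset.eq_of_subset_of_card_le
    · intro a ha
      rcases Finset.mem_insert.mp (hA2 ha) with rfl | h
      · exact Finset.mem_insert_self _ _
      · exact Finset.mem_insert_of_mem (Finset.mem_erase.mpr ⟨fun hc => hA3 (hc ▸ ha), h⟩)
    · rw [Finset.card_insert_of_notMem (fun h => heS (Finset.erase_subset _ _ h)),
        Finset.card_erase_of_mem (hxS istar), hScard, hA4]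
      omega
  have part2 : M.Indep (insert e (S.erase (x istar))) := hAeq ▸ hAind
  refine ⟨fun t ht => ⟨part1 t ht, hsorted t istar (part1 t ht)⟩, part2, ?_⟩
  intro y hy hind
  rw [hS] at hy
  obtain ⟨t, _, rfl⟩ := Finset.mem_image.mp hy
  exact hsorted t istar (part1 t hind)
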